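/- Every regular language is generated by a star-controlled GCID system of size (2; 3, 0, 1; 2, 0, 0) whose initial component C1 is also its only final component. -/
import Mathlib


/-!
Graph-controlled insertion-deletion (GCID) systems.

Symbols are drawn from the universal symbol set `ℕ`, strings are lists of
symbols.  A GCID system `Π = (k, V, T, A, H, i0, F, R)` has `k` components;
rules `(i, r, j)` move a string from component `i` to component `j`, where
`r` is an insertion rule `(u, η, v)_I` (rewriting `uv → uηv`) or a deletion
rule `(u, δ, v)_D` (rewriting `uδv → uv`), with `u, v ∈ V*` and `η, δ ∈ V⁺`.
-/

namespace GCIDPaper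

/-- Strings over the universal symbol set `ℕ`. -/
abbrev Word : Type := List ℕ

/-- An insertion rule `(u, s, v)_I` (when `isInsertion = true`) or a deletion
rule `(u, s, v)_D` (when `isInsertion = false`), with left context `lctx = u`,
inserted resp. deleted string `core = s`, and right context `rctx = v`. -/
structure InsDelRule : Type where
  isInsertion : Bool
  lctx : Word
  core : Word
  rctx : Word
  deriving DecidableEq

/-- The insertion rule `(u, η, v)_I`. -/
def insRule (u η v : Word) : InsDelRule := ⟨true, u, η, v⟩

/-- The deletion rule `(u, δ, v)_D`. -/
def delRule (u δ v : Word) : InsDelRule := ⟨false, u, δ, v⟩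

/-- Applying a rule to a string: the insertion rule `(u, η, v)_I` corresponds
to the rewriting `uv → uηv`, the deletion rule `(u, δ, v)_D` to `uδv → uv`. -/
def InsDelRule.Applies (r : InsDelRule) (w w' : Word) : Prop :=
  (r.isInsertion = true →
    ∃ x y, w = x ++ r.lctx ++ r.rctx ++ y ∧
      w' = x ++ r.lctx ++ r.core ++ r.rctx ++ y) ∧
  (r.isInsertion = false →
    ∃ x y, w = x ++ r.lctx ++ r.core ++ r.rctx ++ y ∧
      w' = x ++ r.lctx ++ r.rctx ++ y)

/-- A graph-controlled insertion-deletion system.  The components are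
numbered `1, …, k`; `i0` is the initial component, `F` the set of final
components, `axioms` the finite set of axioms (placed in component `i0`),
and `R` the finite set of rules `(i, r, j)`. -/
structure System : Type where
  k : ℕ
  V : Finset ℕ
  T : Finset ℕ
  axioms : Finset Word
  i0 : ℕ
  F : Finset ℕ
  R : Finset (ℕ × InsDelRule × ℕ)
  k_pos : 1 ≤ k
  T_sub_V : T ⊆ V
  axioms_over_V : ∀ w ∈ axioms, ∀ a ∈ w, a ∈ V
  i0_mem : i0 ∈ Finset.Icc 1 k
  F_sub : F ⊆ Finset.Icc 1 k
  R_wf : ∀ q ∈ R, q.1 ∈ Finset.Icc 1 k ∧ q.2.2 ∈ Finset.Icc 1 k ∧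
    q.2.1.core ≠ [] ∧ (∀ a ∈ q.2.1.lctx, a ∈ V) ∧
    (∀ a ∈ q.2.1.core, a ∈ V) ∧ (∀ a ∈ q.2.1.rctx, a ∈ V)

/-- One derivation step between configurations: `(w)_i ⇒ (w')_j` if some rule
`(i, r, j)` of the system applied to `w` yields `w'`. -/
def Step (S : System) (c c' : Word × ℕ) : Prop :=
  ∃ q ∈ S.R, q.1 = c.2 ∧ q.2.2 = c'.2 ∧ q.2.1.Applies c.1 c'.1

/-- The reflexive-transitive closure `⇒*` of the step relation. -/
def Derives (S : System) : Word × ℕ → Word × ℕ → Prop :=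
  Relation.ReflTransGen (Step S)

/-- The language generated:
`L(Π) = { w ∈ T* : (x)_{i0} ⇒* (w)_{i_f} for some axiom x and some i_f ∈ F }`. -/
def language (S : System) : Set Word :=
  { w | (∀ a ∈ w, a ∈ S.T) ∧
    ∃ x ∈ S.axioms, ∃ f ∈ S.F, Derives S (x, S.i0) (w, f) }

/-- A single rule obeys the size bounds `(n, i', i''; m, j', j'')`. -/
def InsDelRule.SizeLE (r : InsDelRule) (n i' i'' m j' j'' : ℕ) : Prop :=
  (r.isInsertion = true →
    r.core.length ≤ n ∧ r.lctx.length ≤ i' ∧ r.rctx.length ≤ i'') ∧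
  (r.isInsertion = false →
    r.core.length ≤ m ∧ r.lctx.length ≤ j' ∧ r.rctx.length ≤ j'')

/-- The system has size `(k; n, i', i''; m, j', j'')`. -/
def HasSize (S : System) (k n i' i'' m j' j'' : ℕ) : Prop :=
  S.k = k ∧ ∀ q ∈ S.R, q.2.1.SizeLE n i' i'' m j' j''

/-- Star-controlled: the underlying undirected control graph (with an edge
`{Ci, Cj}` whenever there is a rule `(i, r, j)`) has exactly the edge set
`{ {C1, Ci} : 2 ≤ i ≤ k }`; in particular there are no loops. -/
def StarControlled (S : System) : Prop :=
  (∀ q ∈ S.R, ∃ i ∈ Finset.Icc 2 S.k, ({q.1, q.2.2} : Finset ℕ) = {1, i}) ∧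
  (∀ i ∈ Finset.Icc 2 S.k, ∃ q ∈ S.R, ({q.1, q.2.2} : Finset ℕ) = {1, i})

/-- The class `GCID(k; n, i', i''; m, j', j'')` of languages generated by GCID
systems of the given size. -/
def GCIDClass (k n i' i'' m j' j'' : ℕ) : Set (Set Word) :=
  { L | ∃ S : System, HasSize S k n i' i'' m j' j'' ∧ language S = L }

/-- The class `GCID_S(k; n, i', i''; m, j', j'')` of languages generated by
star-controlled GCID systems of the given size. -/
def GCID_S (k n i' i'' m j' j'' : ℕ) : Set (Set Word) :=
  { L | ∃ S : System, StarControlled S ∧ HasSize S k n i' i'' m j' j'' ∧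
    language S = L }

/-! ### Auxiliary construction: simulating a DFA -/

section RegularConstruction

open scoped Classical

/-- Splitting around a symbol that occurs exactly once on the right-hand side. -/
lemma uniq_split {x y z w : Word} {c : ℕ} (h : x ++ c :: y = z ++ c :: w)
    (hz : c ∉ z) (hw : c ∉ w) : x = z ∧ y = w := by
  induction z generalizing x with
  | nil =>
    cases x with
    | nil => simpa using h
    | cons a x' =>
      simp only [List.nil_append, List.cons_append, List.cons.injEq] at h
      obtain ⟨rfl, h⟩ := h
      exact absurd (by rw [← h]; simp) hw
  | cons b z' ih =>
    cases x with
    | nil =>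
      simp only [List.nil_append, List.cons_append, List.cons.injEq] at h
      exact absurd (by simp [h.1]) hz
    | cons a x' =>
      simp only [List.cons_append, List.cons.injEq] at h
      obtain ⟨rfl, h⟩ := h
      have := ih h (fun hc => hz (List.mem_cons_of_mem _ hc))
      exact ⟨by rw [this.1], this.2⟩

variable {σ : Type} [Fintype σ]

/-- Numeric encoding of a state. -/
noncomputable def enc (s : σ) : ℕ := ((Fintype.equivFin σ) s : ℕ)

lemma enc_inj {s s' : σ} (h : enc s = enc s') : s = s' := by
  have := Fin.val_injective h
  exact (Fintype.equivFin σ).injective this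

variable (T : Finset ℕ)

/-- All symbols of `T` are below `base T`. -/
def base : ℕ := T.sup id + 1

lemma lt_base_of_mem {a : ℕ} (h : a ∈ T) : a < base T :=
  Nat.lt_succ_of_le (Finset.le_sup (f := id) h)

/-- The nonterminal symbol for a state. -/
noncomputable def nt (s : σ) : ℕ := base T + 4 * enc s
/-- The label symbol for a rule `A_s → a A_{δ(s,a)}`. -/
noncomputable def lab (s : σ) (a : ℕ) : ℕ := base T + 4 * Nat.pair (enc s) a + 1
/-- The label symbol for a rule `A_s → λ`. -/
noncomputable def labq (s : σ) : ℕ := base T + 4 * enc s + 2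
/-- A dummy symbol that never occurs in a reachable string. -/
def zz : ℕ := base T + 3

lemma not_mem_low {y : Word} (hy : ∀ a ∈ y, a ∈ T) {c : ℕ}
    (hc : base T ≤ c) : c ∉ y :=
  fun h => absurd (lt_base_of_mem T (hy c h)) (by omega)

lemma nt_not_mem_T {s : σ} (h : nt T s ∈ T) : False := by
  have := lt_base_of_mem T h; simp only [nt] at this; omega
lemma lab_not_mem_T {s : σ} {a : ℕ} (h : lab T s a ∈ T) : False := by
  have := lt_base_of_mem T h; simp only [lab] at this; omega
lemma labq_not_mem_T {s : σ} (h : labq T s ∈ T) : False := by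
  have := lt_base_of_mem T h; simp only [labq] at this; omega
lemma zz_not_mem_T (h : zz T ∈ T) : False := by
  have := lt_base_of_mem T h; simp only [zz] at this; omega

lemma nt_inj {s s' : σ} (h : nt T s = nt T s') : s = s' := by
  refine enc_inj (show enc s = enc s' by simp only [nt] at h; omega)
lemma labq_inj {s s' : σ} (h : labq T s = labq T s') : s = s' := by
  refine enc_inj (show enc s = enc s' by simp only [labq] at h; omega)
lemma lab_inj {s s' : σ} {a a' : ℕ} (h : lab T s a = lab T s' a') :
    s = s' ∧ a = a' := by
  have hp : Nat.pair (enc s) a = Nat.pair (enc s') a' := by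
    simp only [lab] at h; omega
  rw [Nat.pair_eq_pair] at hp
  exact ⟨enc_inj hp.1, hp.2⟩

lemma lab_ne_nt {s s' : σ} {a : ℕ} (h : lab T s a = nt T s') : False := by
  simp only [lab, nt] at h; omega
lemma lab_ne_labq {s s' : σ} {a : ℕ} (h : lab T s a = labq T s') : False := by
  simp only [lab, labq] at h; omega
lemma labq_ne_nt {s s' : σ} (h : labq T s = nt T s') : False := by
  simp only [labq, nt] at h; omega
lemma zz_ne_nt {s : σ} (h : zz T = nt T s) : False := by
  simp only [zz, nt] at h; omega
lemma zz_ne_lab {s : σ} {a : ℕ} (h : zz T = lab T s a) : False := by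
  simp only [zz, lab] at h; omega
lemma zz_ne_labq {s : σ} (h : zz T = labq T s) : False := by
  simp only [zz, labq] at h; omega

variable (M : DFA ℕ σ)

/-- The accepting states, as a finset. -/
noncomputable def acc : Finset σ := Finset.univ.filter (· ∈ M.accept)

lemma mem_acc {s : σ} : s ∈ acc M ↔ s ∈ M.accept := by simp [acc]

/-- Simulation of a right-linear rule `A_s → a A_{δ(s,a)}`: insertion part. -/
noncomputable def ruleIns (s : σ) (a : ℕ) : ℕ × InsDelRule × ℕ :=
  (1, insRule [] [a, nt T (M.step s a), lab T s a] [nt T s], 2)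
/-- Simulation of a right-linear rule `A_s → a A_{δ(s,a)}`: deletion part. -/
noncomputable def ruleDel (s : σ) (a : ℕ) : ℕ × InsDelRule × ℕ :=
  (2, delRule [] [lab T s a, nt T s] [], 1)
/-- Simulation of a rule `A_s → λ`: insertion part. -/
noncomputable def ruleInsQ (s : σ) : ℕ × InsDelRule × ℕ :=
  (1, insRule [] [labq T s] [nt T s], 2)
/-- Simulation of a rule `A_s → λ`: deletion part. -/
noncomputable def ruleDelQ (s : σ) : ℕ × InsDelRule × ℕ :=
  (2, delRule [] [labq T s, nt T s] [], 1)
/-- A never-applicable dummy rule, ensuring the control graph is a star. -/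
def ruleDummy : ℕ × InsDelRule × ℕ :=
  (1, insRule [] [zz T] [zz T], 2)

/-- The rule set of the simulating system. -/
noncomputable def Rset : Finset (ℕ × InsDelRule × ℕ) :=
  (((Finset.univ : Finset σ) ×ˢ T).image fun p => ruleIns T M p.1 p.2) ∪
  (((Finset.univ : Finset σ) ×ˢ T).image fun p => ruleDel T p.1 p.2) ∪
  ((acc M).image (ruleInsQ T)) ∪ ((acc M).image (ruleDelQ T)) ∪ {ruleDummy T}

lemma mem_Rset {q : ℕ × InsDelRule × ℕ} :
    q ∈ Rset T M ↔
      (∃ s : σ, ∃ a ∈ T, q = ruleIns T M s a) ∨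
      (∃ s : σ, ∃ a ∈ T, q = ruleDel T s a) ∨
      (∃ s ∈ acc M, q = ruleInsQ T s) ∨
      (∃ s ∈ acc M, q = ruleDelQ T s) ∨ q = ruleDummy T := by
  simp only [Rset, Finset.mem_union, Finset.mem_image, Finset.mem_product,
    Finset.mem_univ, true_and, Finset.mem_singleton, Prod.exists]
  constructor
  · rintro ((((⟨s, a, ha, h⟩ | ⟨s, a, ha, h⟩) | ⟨s, hs, h⟩) | ⟨s, hs, h⟩) | h)
    · exact Or.inl ⟨s, a, ha, h.symm⟩
    · exact Or.inr (Or.inl ⟨s, a, ha, h.symm⟩)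
    · exact Or.inr (Or.inr (Or.inl ⟨s, hs, h.symm⟩))
    · exact Or.inr (Or.inr (Or.inr (Or.inl ⟨s, hs, h.symm⟩)))
    · exact Or.inr (Or.inr (Or.inr (Or.inr h)))
  · rintro (⟨s, a, ha, h⟩ | ⟨s, a, ha, h⟩ | ⟨s, hs, h⟩ | ⟨s, hs, h⟩ | h)
    · exact Or.inl (Or.inl (Or.inl (Or.inl ⟨s, a, ha, h.symm⟩)))
    · exact Or.inl (Or.inl (Or.inl (Or.inr ⟨s, a, ha, h.symm⟩)))
    · exact Or.inl (Or.inl (Or.inr ⟨s, hs, h.symm⟩))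
    · exact Or.inl (Or.inr ⟨s, hs, h.symm⟩)
    · exact Or.inr h

/-- The alphabet of the simulating system. -/
noncomputable def Vset : Finset ℕ :=
  T ∪ (Finset.univ.image (nt T (σ := σ))) ∪
  ((Finset.univ ×ˢ T).image fun p : σ × ℕ => lab T p.1 p.2) ∪
  (Finset.univ.image (labq T (σ := σ))) ∪ {zz T}

lemma mem_V_of_T {a : ℕ} (h : a ∈ T) : a ∈ Vset (σ := σ) T := by
  simp [Vset]; tauto
lemma nt_mem_V (s : σ) : nt T s ∈ Vset (σ := σ) T := by
  simp only [Vset, Finset.mem_union]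
  exact Or.inl (Or.inl (Or.inl (Or.inr (by simp))))
lemma lab_mem_V (s : σ) {a : ℕ} (ha : a ∈ T) : lab T s a ∈ Vset (σ := σ) T := by
  simp only [Vset, Finset.mem_union]
  refine Or.inl (Or.inl (Or.inr ?_))
  simp only [Finset.mem_image, Finset.mem_product, Finset.mem_univ, true_and,
    Prod.exists]
  exact ⟨s, a, ha, rfl⟩
lemma labq_mem_V (s : σ) : labq T s ∈ Vset (σ := σ) T := by
  simp only [Vset, Finset.mem_union]
  exact Or.inl (Or.inr (by simp))
lemma zz_mem_V : zz T ∈ Vset (σ := σ) T := by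
  simp [Vset]

/-- The simulating GCID system. -/
noncomputable def Sys : System where
  k := 2
  V := Vset (σ := σ) T
  T := T
  axioms := {[nt T M.start]}
  i0 := 1
  F := {1}
  R := Rset T M
  k_pos := by norm_num
  T_sub_V := fun a ha => mem_V_of_T T ha
  axioms_over_V := by
    intro w hw a ha
    simp only [Finset.mem_singleton] at hw
    subst hw
    simp only [List.mem_singleton] at ha
    subst ha
    exact nt_mem_V T M.start
  i0_mem := by decide
  F_sub := by decide
  R_wf := by
    intro q hq
    rw [mem_Rset] at hq
    rcases hq with ⟨s, a, ha, rfl⟩ | ⟨s, a, ha, rfl⟩ | ⟨s, hs, rfl⟩ | ⟨s, hs, rfl⟩ | rfl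
    · exact ⟨by norm_num [ruleIns, Finset.mem_Icc], by norm_num [ruleIns, Finset.mem_Icc], by simp [ruleIns, insRule],
        by simp [ruleIns, insRule],
        by simp only [ruleIns, insRule, List.mem_cons, List.not_mem_nil, or_false]
           rintro b (rfl | rfl | rfl)
           exacts [mem_V_of_T T ha, nt_mem_V T _, lab_mem_V T s ha],
        by simp only [ruleIns, insRule, List.mem_singleton]
           rintro b rfl; exact nt_mem_V T s⟩
    · exact ⟨by norm_num [ruleDel, Finset.mem_Icc], by norm_num [ruleDel, Finset.mem_Icc], by simp [ruleDel, delRule],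
        by simp [ruleDel, delRule],
        by simp only [ruleDel, delRule, List.mem_cons, List.not_mem_nil, or_false]
           rintro b (rfl | rfl)
           exacts [lab_mem_V T s ha, nt_mem_V T s],
        by simp [ruleDel, delRule]⟩
    · exact ⟨by norm_num [ruleInsQ, Finset.mem_Icc], by norm_num [ruleInsQ, Finset.mem_Icc], by simp [ruleInsQ, insRule],
        by simp [ruleInsQ, insRule],
        by simp only [ruleInsQ, insRule, List.mem_singleton]
           rintro b rfl; exact labq_mem_V T s,
        by simp only [ruleInsQ, insRule, List.mem_singleton]
           rintro b rfl; exact nt_mem_V T s⟩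
    · exact ⟨by norm_num [ruleDelQ, Finset.mem_Icc], by norm_num [ruleDelQ, Finset.mem_Icc], by simp [ruleDelQ, delRule],
        by simp [ruleDelQ, delRule],
        by simp only [ruleDelQ, delRule, List.mem_cons, List.not_mem_nil, or_false]
           rintro b (rfl | rfl)
           exacts [labq_mem_V T s, nt_mem_V T s],
        by simp [ruleDelQ, delRule]⟩
    · exact ⟨by norm_num [ruleDummy, Finset.mem_Icc], by norm_num [ruleDummy, Finset.mem_Icc], by simp [ruleDummy, insRule],
        by simp [ruleDummy, insRule],
        by simp only [ruleDummy, insRule, List.mem_singleton]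
           rintro b rfl; exact zz_mem_V T,
        by simp only [ruleDummy, insRule, List.mem_singleton]
           rintro b rfl; exact zz_mem_V T⟩

/-- The invariant describing all reachable configurations. -/
def Inv (c : Word × ℕ) : Prop :=
  (c.2 = 1 ∧ ∃ y : Word, (∀ a ∈ y, a ∈ T) ∧
    (c.1 = y ++ [nt T (M.eval y)] ∨ (c.1 = y ∧ M.eval y ∈ M.accept))) ∨
  (c.2 = 2 ∧ ∃ y : Word, (∀ a ∈ y, a ∈ T) ∧
    ((∃ a ∈ T, c.1 = y ++ [a, nt T (M.step (M.eval y) a),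
        lab T (M.eval y) a, nt T (M.eval y)]) ∨
     (M.eval y ∈ M.accept ∧ c.1 = y ++ [labq T (M.eval y), nt T (M.eval y)])))

lemma step_inv {c c' : Word × ℕ} (h : Step (Sys T M) c c') (hi : Inv T M c) :
    Inv T M c' := by
  obtain ⟨q, hqR, hq1, hq2, hap⟩ := h
  have hqR' : q ∈ Rset T M := hqR
  rw [mem_Rset] at hqR'
  rcases hqR' with ⟨s, a, ha, rfl⟩ | ⟨s, a, ha, rfl⟩ | ⟨s, hs, rfl⟩ | ⟨s, hs, rfl⟩ | rfl
  · -- ruleIns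
    obtain ⟨x, z, hw, hw'⟩ := hap.1 rfl
    simp only [ruleIns, insRule, List.nil_append, List.append_nil] at hw hw' hq1 hq2
    rcases hi with ⟨h1, y, hy, hu⟩ | ⟨h2, _⟩
    swap
    · omega
    rcases hu with hu | ⟨hu, _⟩
    swap
    · exfalso
      have : nt T s ∈ c.1 := by rw [hw]; simp
      rw [hu] at this
      exact not_mem_low T hy (by simp only [nt]; omega) this
    · have hmem : nt T s ∈ c.1 := by rw [hw]; simp
      rw [hu] at hmem
      rcases List.mem_append.mp hmem with hm | hm
      · exact absurd hm (not_mem_low T hy (by simp only [nt]; omega))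
      · simp only [List.mem_singleton] at hm
        obtain rfl : s = M.eval y := nt_inj T hm
        have heq : x ++ nt T (M.eval y) :: z = y ++ nt T (M.eval y) :: [] := by
          simpa using hw.symm.trans hu
        obtain ⟨hxy, hz⟩ := uniq_split heq
          (not_mem_low T hy (by simp only [nt]; omega)) (by simp)
        subst hz
        refine Or.inr ⟨hq2.symm, y, hy, Or.inl ⟨a, ha, ?_⟩⟩
        rw [hw', hxy]; simp
  · -- ruleDel
    obtain ⟨x, z, hw, hw'⟩ := hap.2 rfl
    simp only [ruleDel, delRule, List.nil_append, List.append_nil] at hw hw' hq1 hq2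
    rcases hi with ⟨h1, _⟩ | ⟨h2, y, hy, hu⟩
    · omega
    rcases hu with ⟨b, hb, hu⟩ | ⟨hacc, hu⟩
    · -- string is y ++ [b, nt t', lab t b, nt t]
      have hmem : lab T s a ∈ c.1 := by
        rw [hw]; simp [List.cons_append]
      rw [hu] at hmem
      simp only [List.mem_append, List.mem_cons, List.not_mem_nil, or_false] at hmem
      rcases hmem with hm | hm | hm | hm | hm
      · exact absurd hm (not_mem_low T hy (by simp only [lab]; omega))
      · exact absurd (hm ▸ hb) (lab_not_mem_T T)
      · exact absurd hm (lab_ne_nt T)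
      · obtain ⟨hse, hab⟩ := lab_inj T hm
        subst hse
        have ha' : a ∈ T := hab ▸ hb
        rw [← hab] at hu
        have heq : x ++ lab T (M.eval y) a :: (nt T (M.eval y) :: z)
            = (y ++ [a, nt T (M.step (M.eval y) a)])
              ++ lab T (M.eval y) a :: [nt T (M.eval y)] := by
          simpa using hw.symm.trans hu
        obtain ⟨hxy, hz2⟩ := uniq_split heq
          (by
            intro hc
            rcases List.mem_append.mp hc with h' | h'
            · exact not_mem_low T hy (by simp only [lab]; omega) h'
            · simp only [List.mem_cons, List.not_mem_nil, or_false] at h'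
              rcases h' with h' | h'
              · exact lab_not_mem_T T (h' ▸ ha')
              · exact lab_ne_nt T h')
          (by simp only [List.mem_singleton]; exact fun h' => lab_ne_nt T h')
        have hz' : z = [] := by simpa using hz2
        subst hz'
        refine Or.inl ⟨hq2.symm, y ++ [a], ?_, Or.inl ?_⟩
        · intro u hu'
          rcases List.mem_append.mp hu' with h' | h'
          · exact hy u h'
          · simp only [List.mem_singleton] at h'; exact h' ▸ ha'
        · rw [hw', hxy]
          simp [DFA.eval_append_singleton]
      · exact absurd hm (lab_ne_nt T)
    · -- string is y ++ [labq t, nt t] : lab can't occur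
      exfalso
      have hmem : lab T s a ∈ c.1 := by
        rw [hw]; simp [List.cons_append]
      rw [hu] at hmem
      simp only [List.mem_append, List.mem_cons, List.not_mem_nil, or_false] at hmem
      rcases hmem with hm | hm | hm
      · exact not_mem_low T hy (by simp only [lab]; omega) hm
      · exact lab_ne_labq T hm
      · exact lab_ne_nt T hm
  · -- ruleInsQ
    obtain ⟨x, z, hw, hw'⟩ := hap.1 rfl
    simp only [ruleInsQ, insRule, List.nil_append, List.append_nil] at hw hw' hq1 hq2
    rcases hi with ⟨h1, y, hy, hu⟩ | ⟨h2, _⟩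
    swap
    · omega
    rcases hu with hu | ⟨hu, _⟩
    swap
    · exfalso
      have : nt T s ∈ c.1 := by rw [hw]; simp
      rw [hu] at this
      exact not_mem_low T hy (by simp only [nt]; omega) this
    · have hmem : nt T s ∈ c.1 := by rw [hw]; simp
      rw [hu] at hmem
      rcases List.mem_append.mp hmem with hm | hm
      · exact absurd hm (not_mem_low T hy (by simp only [nt]; omega))
      · simp only [List.mem_singleton] at hm
        obtain rfl : s = M.eval y := nt_inj T hm
        have heq : x ++ nt T (M.eval y) :: z = y ++ nt T (M.eval y) :: [] := by
          simpa using hw.symm.trans hu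
        obtain ⟨hxy, hz⟩ := uniq_split heq
          (not_mem_low T hy (by simp only [nt]; omega)) (by simp)
        subst hz
        refine Or.inr ⟨hq2.symm, y, hy, Or.inr ⟨(mem_acc M).mp hs, ?_⟩⟩
        rw [hw', hxy]; simp
  · -- ruleDelQ
    obtain ⟨x, z, hw, hw'⟩ := hap.2 rfl
    simp only [ruleDelQ, delRule, List.nil_append, List.append_nil] at hw hw' hq1 hq2
    rcases hi with ⟨h1, _⟩ | ⟨h2, y, hy, hu⟩
    · omega
    rcases hu with ⟨b, hb, hu⟩ | ⟨hacc, hu⟩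
    · exfalso
      have hmem : labq T s ∈ c.1 := by
        rw [hw]; simp [List.cons_append]
      rw [hu] at hmem
      simp only [List.mem_append, List.mem_cons, List.not_mem_nil, or_false] at hmem
      rcases hmem with hm | hm | hm | hm | hm
      · exact not_mem_low T hy (by simp only [labq]; omega) hm
      · exact labq_not_mem_T T (hm ▸ hb)
      · exact labq_ne_nt T hm
      · exact lab_ne_labq T hm.symm
      · exact labq_ne_nt T hm
    · have hmem : labq T s ∈ c.1 := by
        rw [hw]; simp [List.cons_append]
      rw [hu] at hmem
      simp only [List.mem_append, List.mem_cons, List.not_mem_nil, or_false] at hmem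
      rcases hmem with hm | hm | hm
      · exact absurd hm (not_mem_low T hy (by simp only [labq]; omega))
      · obtain rfl : s = M.eval y := labq_inj T hm
        have heq : x ++ labq T (M.eval y) :: (nt T (M.eval y) :: z)
            = y ++ labq T (M.eval y) :: [nt T (M.eval y)] := by
          simpa using hw.symm.trans hu
        obtain ⟨hxy, hz2⟩ := uniq_split heq
          (not_mem_low T hy (by simp only [labq]; omega))
          (by simp only [List.mem_singleton]; exact fun h' => labq_ne_nt T h')
        have hz' : z = [] := by simpa using hz2
        subst hz'
        refine Or.inl ⟨hq2.symm, y, hy, Or.inr ⟨?_, hacc⟩⟩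
        rw [hw', hxy]; simp
      · exact absurd hm (labq_ne_nt T)
  · -- ruleDummy: never applicable
    exfalso
    obtain ⟨x, z, hw, _⟩ := hap.1 rfl
    simp only [ruleDummy, insRule, List.nil_append, List.append_nil] at hw hq1
    have hmem : zz T ∈ c.1 := by rw [hw]; simp
    rcases hi with ⟨h1, y, hy, hu⟩ | ⟨h2, y, hy, hu⟩
    · rcases hu with hu | ⟨hu, _⟩
      · rw [hu] at hmem
        rcases List.mem_append.mp hmem with hm | hm
        · exact not_mem_low T hy (by simp only [zz]; omega) hm
        · simp only [List.mem_singleton] at hm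
          exact zz_ne_nt T hm
      · rw [hu] at hmem
        exact not_mem_low T hy (by simp only [zz]; omega) hmem
    · rcases hu with ⟨b, hb, hu⟩ | ⟨hacc, hu⟩
      · rw [hu] at hmem
        simp only [List.mem_append, List.mem_cons, List.not_mem_nil, or_false] at hmem
        rcases hmem with hm | hm | hm | hm | hm
        · exact not_mem_low T hy (by simp only [zz]; omega) hm
        · exact zz_not_mem_T T (hm ▸ hb)
        · exact zz_ne_nt T hm
        · exact zz_ne_lab T hm
        · exact zz_ne_nt T hm
      · rw [hu] at hmem
        simp only [List.mem_append, List.mem_cons, List.not_mem_nil, or_false] at hmem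
        rcases hmem with hm | hm | hm
        · exact not_mem_low T hy (by simp only [zz]; omega) hm
        · exact zz_ne_labq T hm
        · exact zz_ne_nt T hm

lemma inv_of_derives {c c' : Word × ℕ} (h : Derives (Sys T M) c c')
    (hi : Inv T M c) : Inv T M c' := by
  induction h with
  | refl => exact hi
  | tail _ hstep ih => exact step_inv T M hstep ih

/-- Completeness: simulating a run of the DFA over a prefix. -/
lemma derive_prefix (y : Word) (hy : ∀ a ∈ y, a ∈ T) :
    Derives (Sys T M) ([nt T M.start], 1) (y ++ [nt T (M.eval y)], 1) := by
  induction y using List.reverseRecOn with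
  | nil => simp [DFA.eval_nil]; exact Relation.ReflTransGen.refl
  | append_singleton y a ih =>
    have hy' : ∀ b ∈ y, b ∈ T := fun b hb => hy b (List.mem_append_left _ hb)
    have ha : a ∈ T := hy a (by simp)
    have st1 : Step (Sys T M) (y ++ [nt T (M.eval y)], 1)
        (y ++ [a, nt T (M.step (M.eval y) a), lab T (M.eval y) a,
          nt T (M.eval y)], 2) := by
      refine ⟨ruleIns T M (M.eval y) a, ?_, rfl, rfl, ?_⟩
      · rw [show (Sys T M).R = Rset T M from rfl, mem_Rset]
        exact Or.inl ⟨M.eval y, a, ha, rfl⟩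
      · constructor
        · intro _
          exact ⟨y, [], by simp [ruleIns, insRule], by simp [ruleIns, insRule]⟩
        · intro hf; simp [ruleIns, insRule] at hf
    have st2 : Step (Sys T M)
        (y ++ [a, nt T (M.step (M.eval y) a), lab T (M.eval y) a,
          nt T (M.eval y)], 2)
        (y ++ [a] ++ [nt T (M.eval (y ++ [a]))], 1) := by
      refine ⟨ruleDel T (M.eval y) a, ?_, rfl, rfl, ?_⟩
      · rw [show (Sys T M).R = Rset T M from rfl, mem_Rset]
        exact Or.inr (Or.inl ⟨M.eval y, a, ha, rfl⟩)
      · constructor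
        · intro hf; simp [ruleDel, delRule] at hf
        · intro _
          refine ⟨y ++ [a, nt T (M.step (M.eval y) a)], [], ?_, ?_⟩
          · simp [ruleDel, delRule]
          · simp [ruleDel, delRule, DFA.eval_append_singleton]
    exact ((ih hy').tail st1).tail st2

/-- Completeness: deriving an accepted word. -/
lemma derive_word (w : Word) (hw : ∀ a ∈ w, a ∈ T) (hacc : M.eval w ∈ M.accept) :
    Derives (Sys T M) ([nt T M.start], 1) (w, 1) := by
  have st1 : Step (Sys T M) (w ++ [nt T (M.eval w)], 1)
      (w ++ [labq T (M.eval w), nt T (M.eval w)], 2) := by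
    refine ⟨ruleInsQ T (M.eval w), ?_, rfl, rfl, ?_⟩
    · rw [show (Sys T M).R = Rset T M from rfl, mem_Rset]
      exact Or.inr (Or.inr (Or.inl ⟨M.eval w, (mem_acc M).mpr hacc, rfl⟩))
    · constructor
      · intro _
        exact ⟨w, [], by simp [ruleInsQ, insRule], by simp [ruleInsQ, insRule]⟩
      · intro hf; simp [ruleInsQ, insRule] at hf
  have st2 : Step (Sys T M)
      (w ++ [labq T (M.eval w), nt T (M.eval w)], 2) (w, 1) := by
    refine ⟨ruleDelQ T (M.eval w), ?_, rfl, rfl, ?_⟩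
    · rw [show (Sys T M).R = Rset T M from rfl, mem_Rset]
      exact Or.inr (Or.inr (Or.inr (Or.inl ⟨M.eval w, (mem_acc M).mpr hacc, rfl⟩)))
    · constructor
      · intro hf; simp [ruleDelQ, delRule] at hf
      · intro _
        exact ⟨w, [], by simp [ruleDelQ, delRule], by simp [ruleDelQ, delRule]⟩
  exact ((derive_prefix T M w hw).tail st1).tail st2

end RegularConstruction

/-- Every regular language (over a finite alphabet) is generated by a
star-controlled GCID system of size `(2; 3, 0, 1; 2, 0, 0)` whose initial
component `C1` is also its only final component. -/
theorem regular_subset_gcid_s_2_301_200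
    (L : Set Word) (hreg : Language.IsRegular (L : Language ℕ))
    (T : Finset ℕ) (hT : ∀ w ∈ L, ∀ a ∈ w, a ∈ T) :
    ∃ S : System, StarControlled S ∧ HasSize S 2 3 0 1 2 0 0 ∧
      S.i0 = 1 ∧ S.F = {1} ∧ language S = L := by
  obtain ⟨σ, hfin, M, hM⟩ := hreg
  refine ⟨Sys T M, ?_, ?_, rfl, rfl, ?_⟩
  · -- star-controlled
    constructor
    · intro q hq
      refine ⟨2, by rw [show (Sys T M).k = 2 from rfl]; norm_num [Finset.mem_Icc], ?_⟩
      have hq' : q ∈ Rset T M := hq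
      rw [mem_Rset] at hq'
      rcases hq' with ⟨s, a, _, rfl⟩ | ⟨s, a, _, rfl⟩ | ⟨s, _, rfl⟩ | ⟨s, _, rfl⟩ | rfl
      · rfl
      · exact Finset.pair_comm 2 1
      · rfl
      · exact Finset.pair_comm 2 1
      · rfl
    · intro i hi
      have : i = 2 := by
        rw [show (Sys T M).k = 2 from rfl, Finset.mem_Icc] at hi; omega
      subst this
      refine ⟨ruleDummy T, ?_, rfl⟩
      rw [show (Sys T M).R = Rset T M from rfl, mem_Rset]
      exact Or.inr (Or.inr (Or.inr (Or.inr rfl)))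
  · -- size
    refine ⟨rfl, ?_⟩
    intro q hq
    have hq' : q ∈ Rset T M := hq
    rw [mem_Rset] at hq'
    rcases hq' with ⟨s, a, _, rfl⟩ | ⟨s, a, _, rfl⟩ | ⟨s, _, rfl⟩ | ⟨s, _, rfl⟩ | rfl
    · exact ⟨fun _ => by simp [ruleIns, insRule],
        fun hf => by simp [ruleIns, insRule] at hf⟩
    · exact ⟨fun hf => by simp [ruleDel, delRule] at hf,
        fun _ => by simp [ruleDel, delRule]⟩
    · exact ⟨fun _ => by simp [ruleInsQ, insRule],
        fun hf => by simp [ruleInsQ, insRule] at hf⟩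
    · exact ⟨fun hf => by simp [ruleDelQ, delRule] at hf,
        fun _ => by simp [ruleDelQ, delRule]⟩
    · exact ⟨fun _ => by simp [ruleDummy, insRule],
        fun hf => by simp [ruleDummy, insRule] at hf⟩
  · -- language
    ext w
    constructor
    · rintro ⟨hwT, x, hx, f, hf, hder⟩
      have hx' : x = [nt T M.start] := by
        simpa [Sys] using hx
      have hf' : f = 1 := by simpa [Sys] using hf
      subst hx'; subst hf'
      have hinv : Inv T M (w, 1) := by
        refine inv_of_derives T M hder ?_
        exact Or.inl ⟨rfl, [], by simp, Or.inl (by simp [DFA.eval_nil])⟩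
      rcases hinv with ⟨-, y, hy, hu | ⟨hu, hacc⟩⟩ | ⟨h2, -⟩
      · exfalso
        have hu' : w = y ++ [nt T (M.eval y)] := hu
        have : nt T (M.eval y) ∈ w := by rw [hu']; simp
        exact nt_not_mem_T T (hwT _ this)
      · have hu' : w = y := hu
        subst hu'
        have : w ∈ M.accepts := (DFA.mem_accepts M).mpr hacc
        rw [hM] at this
        exact this
      · exact absurd h2 (by norm_num)
    · intro hw
      have hwT : ∀ a ∈ w, a ∈ T := hT w hw
      have hacc : M.eval w ∈ M.accept := by
        have : w ∈ M.accepts := by rw [hM]; exact hw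
        exact (DFA.mem_accepts M).mp this
      exact ⟨hwT, [nt T M.start], by simp [Sys], 1, by simp [Sys],
        derive_word T M w hwT hacc⟩

end GCIDPaper
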